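/- Let I be an open interval, γ : I → ℝ³ a C² curve with ‖γ(s)‖ = 1 and ‖γ'(s)‖ = 1 for all s ∈ I (a unit-speed curve on the unit sphere), and Ψ : ℝ³ → ℝ a homogeneous polynomial of degree n. Suppose that for every s ∈ I and every pair of unit vectors v₋, v₊ ∈ ℝ³ with ⟨v₋, γ(s)⟩ = ⟨v₊, γ(s)⟩ = 0 and ⟨v₊, γ'(s)⟩ = ⟨v₋, γ'(s)⟩, one has Ψ(γ(s) × v₋) = Ψ(γ(s) × v₊). Then the dual curve Γ = γ × γ' satisfies Ψ(Γ(s) − ε·Γ'(s)) = Ψ(Γ(s) + ε·Γ'(s)) for every s ∈ I and every ε ∈ ℝ. -/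

import Mathlib

open MvPolynomial

/-- The standard cross product on `ℝ³`. -/
def cross3 (a b : Fin 3 → ℝ) : Fin 3 → ℝ :=
  ![a 1 * b 2 - a 2 * b 1, a 2 * b 0 - a 0 * b 2, a 0 * b 1 - a 1 * b 0]

/-- The standard Euclidean inner product on `ℝ³`. -/
def dot3 (a b : Fin 3 → ℝ) : ℝ := a 0 * b 0 + a 1 * b 1 + a 2 * b 2

section API
variable (a b c x y u w g : Fin 3 → ℝ) (r : ℝ)

lemma cross3_zero : cross3 x x 0 = 0 := by simp [cross3]; ring
lemma dot3_comm : dot3 a b = dot3 b a := by simp [dot3]; ring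
lemma dot3_smul_left : dot3 (r • a) b = r * dot3 a b := by simp [dot3]; ring
lemma dot3_smul_right : dot3 a (r • b) = r * dot3 a b := by simp [dot3]; ring
lemma dot3_sub_left : dot3 (a - b) c = dot3 a c - dot3 b c := by simp [dot3]; ring
lemma dot3_add_left : dot3 (a + b) c = dot3 a c + dot3 b c := by simp [dot3]; ring
lemma dot3_self_nonneg : 0 ≤ dot3 a a := by
  simp only [dot3]
  nlinarith [sq_nonneg (a 0), sq_nonneg (a 1), sq_nonneg (a 2)]
lemma dot3_cross_right : dot3 (cross3 a b) b = 0 := by simp [dot3, cross3]; ring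
lemma dot3_cross_left : dot3 (cross3 a b) a = 0 := by simp [dot3, cross3]; ring
lemma binet : dot3 (cross3 a b) (cross3 c x) =
    dot3 a c * dot3 b x - dot3 a x * dot3 b c := by simp [dot3, cross3]; ring
lemma triple : dot3 (cross3 a b) c = dot3 a (cross3 b c) := by simp [dot3, cross3]; ring
lemma cross3_smul_right : cross3 a (r • b) = r • cross3 a b := by
  funext i; fin_cases i <;> simp [cross3] <;> ring
lemma crossCross3 : cross3 a (cross3 b a) = dot3 a a • b - dot3 a b • a := by
  funext i; fin_cases i <;> simp [cross3, dot3] <;> ring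
lemma cross3_self : cross3 a a = 0 := by
  funext i; fin_cases i <;> simp [cross3] <;> ring
end API

lemma eval_smul_hom {n : ℕ} {Ψ : MvPolynomial (Fin 3) ℝ} (hΨ : Ψ.IsHomogeneous n)
    (c : ℝ) (x : Fin 3 → ℝ) : eval (c • x) Ψ = c ^ n * eval x Ψ := by
  rw [eval_eq, eval_eq, Finset.mul_sum]
  refine Finset.sum_congr rfl fun d hd => ?_
  have hdeg : ∑ i ∈ d.support, d i = n := by
    have h := hΨ (MvPolynomial.mem_support_iff.mp hd)
    rw [← h]; simp [Finsupp.weight_apply, Finsupp.sum]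
  calc Ψ.coeff d * ∏ i ∈ d.support, (c • x) i ^ d i
      = Ψ.coeff d * ((∏ i ∈ d.support, c ^ d i) * ∏ i ∈ d.support, x i ^ d i) := by
        rw [← Finset.prod_mul_distrib]; simp [mul_pow]
    _ = c ^ n * (Ψ.coeff d * ∏ i ∈ d.support, x i ^ d i) := by
        rw [Finset.prod_pow_eq_pow_sum, hdeg]; ring

lemma hasDerivAt_dot3 {f h : ℝ → Fin 3 → ℝ} {f' h' : Fin 3 → ℝ} {s : ℝ}
    (Hf : HasDerivAt f f' s) (Hh : HasDerivAt h h' s) :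
    HasDerivAt (fun t => dot3 (f t) (h t)) (dot3 f' (h s) + dot3 (f s) h') s := by
  have hf : ∀ i, HasDerivAt (fun t => f t i) (f' i) s := hasDerivAt_pi.mp Hf
  have hh : ∀ i, HasDerivAt (fun t => h t i) (h' i) s := hasDerivAt_pi.mp Hh
  have H := (((hf 0).mul (hh 0)).add ((hf 1).mul (hh 1))).add ((hf 2).mul (hh 2))
  have e : dot3 f' (h s) + dot3 (f s) h' =
      f' 0 * h s 0 + f s 0 * h' 0 + (f' 1 * h s 1 + f s 1 * h' 1) +
        (f' 2 * h s 2 + f s 2 * h' 2) := by simp [dot3]; ring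
  rw [e]; exact H

lemma hasDerivAt_cross3 {f h : ℝ → Fin 3 → ℝ} {f' h' : Fin 3 → ℝ} {s : ℝ}
    (Hf : HasDerivAt f f' s) (Hh : HasDerivAt h h' s) :
    HasDerivAt (fun t => cross3 (f t) (h t)) (cross3 (f s) h' + cross3 f' (h s)) s := by
  have hf : ∀ i, HasDerivAt (fun t => f t i) (f' i) s := hasDerivAt_pi.mp Hf
  have hh : ∀ i, HasDerivAt (fun t => h t i) (h' i) s := hasDerivAt_pi.mp Hh
  refine hasDerivAt_pi.mpr fun i => ?_
  fin_cases i
  · have H := ((hf 1).mul (hh 2)).sub ((hf 2).mul (hh 1))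
    have e : (cross3 (f s) h' + cross3 f' (h s)) 0 =
        f' 1 * h s 2 + f s 1 * h' 2 - (f' 2 * h s 1 + f s 2 * h' 1) := by
      simp [cross3]; ring
    exact e ▸ H
  · have H := ((hf 2).mul (hh 0)).sub ((hf 0).mul (hh 2))
    have e : (cross3 (f s) h' + cross3 f' (h s)) 1 =
        f' 2 * h s 0 + f s 2 * h' 0 - (f' 0 * h s 2 + f s 0 * h' 2) := by
      simp [cross3]; ring
    exact e ▸ H
  · have H := ((hf 0).mul (hh 1)).sub ((hf 1).mul (hh 0))
    have e : (cross3 (f s) h' + cross3 f' (h s)) 2 =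
        f' 0 * h s 1 + f s 0 * h' 1 - (f' 1 * h s 0 + f s 1 * h' 0) := by
      simp [cross3]; ring
    exact e ▸ H

lemma dot3_sub_smul (p q : Fin 3 → ℝ) (c : ℝ) :
    dot3 (p - c • q) (p - c • q) =
      dot3 p p - 2 * c * dot3 p q + c ^ 2 * dot3 q q := by
  simp [dot3]; ring

lemma dot3_add_smul (p q : Fin 3 → ℝ) (c : ℝ) :
    dot3 (p + c • q) (p + c • q) =
      dot3 p p + 2 * c * dot3 p q + c ^ 2 * dot3 q q := by
  simp [dot3]; ring
/-- spherical case: if a homogeneous polynomial `Ψ` of degree `n`, evaluated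
on momenta `M = r × v`, is invariant under the Birkhoff billiard reflection law along a
unit-speed `C²` curve `γ` on the unit sphere, then `Ψ` satisfies the outer-billiard
symmetry identity `Ψ(Γ − εΓ') = Ψ(Γ + εΓ')` along the dual curve `Γ = γ × γ'`. -/
theorem stmt13 (a b : ℝ) (γ : ℝ → Fin 3 → ℝ)
    (hγ : ContDiffOn ℝ 2 γ (Set.Ioo a b))
    (hsph : ∀ s ∈ Set.Ioo a b, dot3 (γ s) (γ s) = 1)
    (hspeed : ∀ s ∈ Set.Ioo a b, dot3 (deriv γ s) (deriv γ s) = 1)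
    (n : ℕ) (Ψ : MvPolynomial (Fin 3) ℝ) (hΨ : Ψ.IsHomogeneous n)
    (hrefl : ∀ s ∈ Set.Ioo a b, ∀ vm vp : Fin 3 → ℝ,
      dot3 vm vm = 1 → dot3 vp vp = 1 →
      dot3 vm (γ s) = 0 → dot3 vp (γ s) = 0 →
      dot3 vp (deriv γ s) = dot3 vm (deriv γ s) →
      eval (cross3 (γ s) vm) Ψ = eval (cross3 (γ s) vp) Ψ) :
    ∀ s ∈ Set.Ioo a b, ∀ ε : ℝ,
      eval (cross3 (γ s) (deriv γ s)
          - ε • deriv (fun t => cross3 (γ t) (deriv γ t)) s) Ψ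
        = eval (cross3 (γ s) (deriv γ s)
            + ε • deriv (fun t => cross3 (γ t) (deriv γ t)) s) Ψ := by
  intro s hs ε
  have hmem : Set.Ioo a b ∈ nhds s := isOpen_Ioo.mem_nhds hs
  -- derivatives
  have hd1 : HasDerivAt γ (deriv γ s) s :=
    ((hγ.contDiffAt hmem).differentiableAt (by norm_num)).hasDerivAt
  have hγ2 : ContDiffOn ℝ (1 + 1) γ (Set.Ioo a b) := by
    exact_mod_cast hγ
  have hder : ContDiffOn ℝ 1 (deriv γ) (Set.Ioo a b) :=
    ((contDiffOn_succ_iff_deriv_of_isOpen isOpen_Ioo).mp hγ2).2.2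
  have hd2 : HasDerivAt (deriv γ) (deriv (deriv γ) s) s :=
    ((hder.differentiableOn one_ne_zero).differentiableAt hmem).hasDerivAt
  set u : Fin 3 → ℝ := γ s with hu
  set w : Fin 3 → ℝ := deriv γ s with hw
  set g : Fin 3 → ℝ := deriv (deriv γ) s with hg
  have huu : dot3 u u = 1 := hsph s hs
  have hww : dot3 w w = 1 := hspeed s hs
  -- dot3 u w = 0
  have huw : dot3 u w = 0 := by
    have hD : HasDerivAt (fun t => dot3 (γ t) (γ t)) (dot3 w u + dot3 u w) s :=
      hasDerivAt_dot3 hd1 hd1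
    have hC : HasDerivAt (fun t => dot3 (γ t) (γ t)) 0 s := by
      refine (hasDerivAt_const s (1:ℝ)).congr_of_eventuallyEq ?_
      exact Filter.eventually_of_mem hmem fun t ht => hsph t ht
    have := hD.unique hC
    rw [dot3_comm w u] at this
    linarith
  -- dot3 w g = 0
  have hwg : dot3 w g = 0 := by
    have hD : HasDerivAt (fun t => dot3 (deriv γ t) (deriv γ t)) (dot3 g w + dot3 w g) s :=
      hasDerivAt_dot3 hd2 hd2
    have hC : HasDerivAt (fun t => dot3 (deriv γ t) (deriv γ t)) 0 s := by
      refine (hasDerivAt_const s (1:ℝ)).congr_of_eventuallyEq ?_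
      exact Filter.eventually_of_mem hmem fun t ht => hspeed t ht
    have := hD.unique hC
    rw [dot3_comm g w] at this
    linarith
  -- derivative of the dual curve
  have hΓ : HasDerivAt (fun t => cross3 (γ t) (deriv γ t)) (cross3 u g) s := by
    have H := hasDerivAt_cross3 hd1 hd2
    rwa [cross3_self, add_zero] at H
  rw [hΓ.deriv]
  -- pure algebra from here on
  set L : Fin 3 → ℝ := cross3 u g with hL
  set Γs : Fin 3 → ℝ := cross3 u w with hΓs
  set ym : Fin 3 → ℝ := Γs - ε • L with hym
  set yp : Fin 3 → ℝ := Γs + ε • L with hyp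
  have hΓΓ : dot3 Γs Γs = 1 := by
    rw [hΓs, binet, huu, hww, huw]; ring
  have hΓL : dot3 Γs L = 0 := by
    rw [hΓs, hL, binet, huu, hwg, dot3_comm w u, huw]; ring
  have hLΓ : dot3 L Γs = 0 := by rw [dot3_comm]; exact hΓL
  have hΓu : dot3 Γs u = 0 := dot3_cross_left u w
  have hLu : dot3 L u = 0 := dot3_cross_left u g
  set N : ℝ := 1 + ε ^ 2 * dot3 L L with hN
  have hLL : 0 ≤ dot3 L L := dot3_self_nonneg L
  have hN1 : 1 ≤ N := by nlinarith [sq_nonneg ε]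
  have hymym : dot3 ym ym = N := by
    rw [hym, dot3_sub_smul, hΓΓ, hΓL, hN]; ring
  have hypyp : dot3 yp yp = N := by
    rw [hyp, dot3_add_smul, hΓΓ, hΓL, hN]; ring
  have hymu : dot3 ym u = 0 := by
    rw [hym, dot3_sub_left, dot3_smul_left, hΓu, hLu]; ring
  have hypu : dot3 yp u = 0 := by
    rw [hyp, dot3_add_left, dot3_smul_left, hΓu, hLu]; ring
  have hymΓ : dot3 ym Γs = 1 := by
    rw [hym, dot3_sub_left, dot3_smul_left, hΓΓ, hLΓ]; ring
  have hypΓ : dot3 yp Γs = 1 := by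
    rw [hyp, dot3_add_left, dot3_smul_left, hΓΓ, hLΓ]; ring
  -- normalization
  set r : ℝ := Real.sqrt N with hr
  have hrpos : 0 < r := Real.sqrt_pos.mpr (by linarith)
  have hr2 : r ^ 2 = N := Real.sq_sqrt (by linarith)
  set vm : Fin 3 → ℝ := r⁻¹ • cross3 ym u with hvm
  set vp : Fin 3 → ℝ := r⁻¹ • cross3 yp u with hvp
  have hsq : ∀ y : Fin 3 → ℝ, dot3 y y = N → dot3 y u = 0 →
      dot3 (r⁻¹ • cross3 y u) (r⁻¹ • cross3 y u) = 1 := by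
    intro y h1 h2
    rw [dot3_smul_left, dot3_smul_right, binet, h1, h2, huu, mul_one, zero_mul,
      sub_zero, ← hr2]
    field_simp
  have hdw : ∀ y : Fin 3 → ℝ, dot3 y Γs = 1 →
      dot3 (r⁻¹ • cross3 y u) w = r⁻¹ := by
    intro y h1
    rw [dot3_smul_left, triple, ← hΓs, h1, mul_one]
  have hducross : ∀ y : Fin 3 → ℝ, dot3 (r⁻¹ • cross3 y u) u = 0 := by
    intro y
    rw [dot3_smul_left, dot3_cross_right, mul_zero]
  have happ := hrefl s hs vm vp (hsq ym hymym hymu) (hsq yp hypyp hypu)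
      (hducross ym) (hducross yp) (by rw [hvm, hvp, hdw ym hymΓ, hdw yp hypΓ])
  have hcr : ∀ y : Fin 3 → ℝ, dot3 y u = 0 →
      cross3 u (r⁻¹ • cross3 y u) = r⁻¹ • y := by
    intro y h2
    rw [cross3_smul_right, crossCross3, huu, dot3_comm u y, h2, one_smul, zero_smul,
      sub_zero]
  rw [hvm, hvp, hcr ym hymu, hcr yp hypu, eval_smul_hom hΨ, eval_smul_hom hΨ] at happ
  have hpow : (r⁻¹) ^ n ≠ 0 := pow_ne_zero _ (inv_ne_zero hrpos.ne')
  exact mul_left_cancel₀ hpow happ
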